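/- arXiv:2306.09981 — 2 statements merged into one kernel-verified Lean document; each statement's English description precedes it below -/
import Mathlib

section
/- For all real x > 1, the tail sum over primes p > x of 1/(p(p-1)) is strictly less than (1/(x-1)) * (2B + 1/log x + 2/(log x)^2), where B is the Meissel–Mertens constant. -/
open Real

/-- The Meissel–Mertens constant `B = γ + ∑_p (log(1 - 1/p) + 1/p)`. -/
noncomputable def mertensB : ℝ :=
  Real.eulerMascheroniConstant +
    ∑' p : Nat.Primes, (Real.log (1 - 1 / ((p : ℕ) : ℝ)) + 1 / ((p : ℕ) : ℝ))

/-- auxiliary function -/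
noncomputable def pf (n : ℕ) : ℝ := 1 / ((n : ℝ) * ((n : ℝ) - 1))

lemma pf_nonneg (n : ℕ) : 0 ≤ pf n := by
  unfold pf
  rcases Nat.eq_zero_or_pos n with h | h
  · subst h; norm_num
  · apply one_div_nonneg.mpr
    have : (1:ℝ) ≤ n := by exact_mod_cast h
    nlinarith

lemma pf_anti {m n : ℕ} (hm : 2 ≤ m) (hmn : m ≤ n) : pf n ≤ pf m := by
  unfold pf
  have hm' : (2:ℝ) ≤ m := by exact_mod_cast hm
  have hmn' : (m:ℝ) ≤ n := by exact_mod_cast hmn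
  apply one_div_le_one_div_of_le
  · nlinarith
  · nlinarith

lemma sum_Ico_pf (N : ℕ) (hN : 2 ≤ N) :
    ∀ B, N ≤ B → ∑ n ∈ Finset.Ico N B, pf n = 1 / ((N:ℝ) - 1) - 1 / ((B:ℝ) - 1) := by
  intro B hB
  induction B, hB using Nat.le_induction with
  | base => simp
  | succ B hB ih =>
    rw [Finset.sum_Ico_succ_top hB, ih]
    have hB' : (2:ℝ) ≤ B := by exact_mod_cast hN.trans hB
    have hpf : pf B = 1/((B:ℝ)-1) - 1/(B:ℝ) := by
      unfold pf
      rw [div_sub_div _ _ (by linarith : (B:ℝ)-1 ≠ 0) (by linarith : (B:ℝ) ≠ 0)]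
      rw [mul_comm ((B:ℝ)-1) (B:ℝ)]
      ring_nf
    rw [hpf]
    push_cast
    ring

lemma sum_pf_le (N : ℕ) (hN : 2 ≤ N) (s : Finset ℕ) (hs : ∀ n ∈ s, N ≤ n) :
    ∑ n ∈ s, pf n ≤ 1 / ((N:ℝ) - 1) := by
  classical
  set B := max (s.sup id + 1) N with hB
  have hsub : s ⊆ Finset.Ico N B := by
    intro n hn
    rw [Finset.mem_Ico]
    refine ⟨hs n hn, ?_⟩
    have : n ≤ s.sup id := Finset.le_sup (f := id) hn
    omega
  have h1 : ∑ n ∈ s, pf n ≤ ∑ n ∈ Finset.Ico N B, pf n :=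
    Finset.sum_le_sum_of_subset_of_nonneg hsub (fun n _ _ => pf_nonneg n)
  rw [sum_Ico_pf N hN B (le_max_right _ _)] at h1
  have hB2 : 2 ≤ B := hN.trans (le_max_right _ _)
  have hB' : (2:ℝ) ≤ B := by exact_mod_cast hB2
  have : 0 ≤ 1 / ((B:ℝ) - 1) := by
    apply one_div_nonneg.mpr; linarith
  linarith

lemma sum_pf_class (M c N : ℕ) (hM : 1 ≤ M) (hN : 2 ≤ N) (s : Finset ℕ)
    (hs : ∀ n ∈ s, n % M = c ∧ N + M ≤ n) :
    ∑ n ∈ s, pf n ≤ 1 / ((M : ℝ) * N) := by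
  classical
  have hM' : (0:ℝ) < M := by exact_mod_cast hM
  have hN' : (0:ℝ) < N := by exact_mod_cast (by omega : 0 < N)
  have key : (M:ℝ) * ∑ n ∈ s, pf n ≤ 1 / (N:ℝ) := by
    rw [Finset.mul_sum]
    have step1 : ∑ n ∈ s, (M:ℝ) * pf n ≤ ∑ n ∈ s, ∑ i ∈ Finset.range M, pf (n - i) := by
      apply Finset.sum_le_sum
      intro n hn
      have h1 : ∑ i ∈ Finset.range M, pf n = (M:ℝ) * pf n := by
        rw [Finset.sum_const, Finset.card_range, nsmul_eq_mul]
      rw [← h1]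
      apply Finset.sum_le_sum
      intro i hi
      have hi' : i < M := Finset.mem_range.mp hi
      have hn' := (hs n hn).2
      exact pf_anti (by omega) (by omega)
    have hinj : ∀ a ∈ s ×ˢ Finset.range M, ∀ b ∈ s ×ˢ Finset.range M,
        a.1 - a.2 = b.1 - b.2 → a = b := by
      intro a ha b hb hab
      simp only [Finset.mem_product, Finset.mem_range] at ha hb
      obtain ⟨ha1, ha2⟩ := ha
      obtain ⟨hb1, hb2⟩ := hb
      have h1 := (hs a.1 ha1).1
      have h2 := (hs b.1 hb1).1
      have h3 := (hs a.1 ha1).2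
      have h4 := (hs b.1 hb1).2
      have hmod : a.1 % M = b.1 % M := by rw [h1, h2]
      have heq1 : a.1 = b.1 := by
        rcases le_total a.1 b.1 with hle | hle
        · have hd : M ∣ b.1 - a.1 := (Nat.modEq_iff_dvd' hle).mp hmod
          have hlt : b.1 - a.1 < M := by omega
          have := Nat.eq_zero_of_dvd_of_lt hd
          omega
        · have hd : M ∣ a.1 - b.1 := (Nat.modEq_iff_dvd' hle).mp hmod.symm
          have hlt : a.1 - b.1 < M := by omega
          have := Nat.eq_zero_of_dvd_of_lt hd
          omega
      have heq2 : a.2 = b.2 := by omega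
      exact Prod.ext heq1 heq2
    have step2 : ∑ n ∈ s, ∑ i ∈ Finset.range M, pf (n - i)
        = ∑ m ∈ (s ×ˢ Finset.range M).image (fun p => p.1 - p.2), pf m := by
      rw [Finset.sum_image hinj, Finset.sum_product]
    have step3 : ∑ m ∈ (s ×ˢ Finset.range M).image (fun p => p.1 - p.2), pf m
        ≤ 1 / (((N+1:ℕ):ℝ) - 1) := by
      apply sum_pf_le (N+1) (by omega)
      intro m hm
      simp only [Finset.mem_image, Finset.mem_product, Finset.mem_range] at hm
      obtain ⟨⟨n, i⟩, ⟨⟨hns, hi⟩, rfl⟩⟩ := hm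
      have := (hs n hns).2
      omega
    have : (((N+1:ℕ):ℝ) - 1) = (N:ℝ) := by push_cast; ring
    rw [this] at step3
    calc ∑ n ∈ s, (M:ℝ) * pf n ≤ _ := step1
      _ = _ := step2
      _ ≤ _ := step3
  have hgoal : (M:ℝ) * (1/((M:ℝ)*N)) = 1/(N:ℝ) := by field_simp
  exact (mul_le_mul_iff_right₀ hM').mp (by rw [hgoal]; exact key)

lemma sum_pf_classes (M N : ℕ) (C : Finset ℕ) (hM : 1 ≤ M) (hN : 2 ≤ N) (s : Finset ℕ)
    (hs : ∀ n ∈ s, n % M ∈ C ∧ N + M ≤ n) :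
    ∑ n ∈ s, pf n ≤ (C.card : ℝ) / ((M:ℝ) * N) := by
  classical
  rw [← Finset.sum_fiberwise_of_maps_to (fun n hn => (hs n hn).1) pf]
  calc ∑ c ∈ C, ∑ n ∈ s.filter (fun n => n % M = c), pf n
      ≤ ∑ _c ∈ C, 1 / ((M:ℝ)*N) := by
        apply Finset.sum_le_sum
        intro c _
        apply sum_pf_class M c N hM hN
        intro n hn
        simp only [Finset.mem_filter] at hn
        exact ⟨hn.2, (hs n hn.1).2⟩
    _ = (C.card : ℝ) / ((M:ℝ)*N) := by
        rw [Finset.sum_const, nsmul_eq_mul, mul_one_div]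

lemma prime_not_dvd {p q : ℕ} (hp : p.Prime) (hq : q.Prime) (h : q < p) : ¬ q ∣ p := by
  intro hd
  rcases (Nat.Prime.eq_one_or_self_of_dvd hp q hd) with h1 | h1
  · exact absurd h1 (Nat.Prime.one_lt hq).ne'
  · omega

lemma prime_mod6 {p : ℕ} (hp : p.Prime) (h : 5 ≤ p) : p % 6 = 1 ∨ p % 6 = 5 := by
  have h2 : ¬ (2 ∣ p) := prime_not_dvd hp Nat.prime_two (by omega)
  have h3 : ¬ (3 ∣ p) := prime_not_dvd hp Nat.prime_three (by omega)
  omega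

lemma prime_mod30 {p : ℕ} (hp : p.Prime) (h : 7 ≤ p) :
    p % 30 ∈ ({1,7,11,13,17,19,23,29} : Finset ℕ) := by
  have h2 : ¬ (2 ∣ p) := prime_not_dvd hp Nat.prime_two (by omega)
  have h3 : ¬ (3 ∣ p) := prime_not_dvd hp Nat.prime_three (by omega)
  have h5 : ¬ (5 ∣ p) := prime_not_dvd hp Nat.prime_five (by omega)
  have e2 : p % 2 = (p % 30) % 2 := (Nat.mod_mod_of_dvd p (by norm_num)).symm
  have e3 : p % 3 = (p % 30) % 3 := (Nat.mod_mod_of_dvd p (by norm_num)).symm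
  have e5 : p % 5 = (p % 30) % 5 := (Nat.mod_mod_of_dvd p (by norm_num)).symm
  simp only [Finset.mem_insert, Finset.mem_singleton]
  obtain ⟨r, hr30, hrval⟩ : ∃ r, r < 30 ∧ p % 30 = r :=
    ⟨p % 30, Nat.mod_lt _ (by norm_num), rfl⟩
  rw [hrval] at e2 e3 e5 ⊢
  interval_cases r <;> omega

lemma tsum_primes_le (x c : ℝ) (hc : 0 ≤ c)
    (h : ∀ T : Finset ℕ, (∀ n ∈ T, n.Prime ∧ x < (n:ℝ)) → ∑ n ∈ T, pf n ≤ c) :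
    (∑' p : Nat.Primes, if x < ((p : ℕ) : ℝ) then pf (p:ℕ) else 0) ≤ c := by
  classical
  apply tsum_le_of_sum_le' hc
  intro u
  rw [← Finset.sum_filter]
  have himg : ∑ p ∈ u.filter (fun p : Nat.Primes => x < ((p:ℕ):ℝ)), pf (p:ℕ)
      = ∑ n ∈ (u.filter (fun p : Nat.Primes => x < ((p:ℕ):ℝ))).image
          (fun p : Nat.Primes => (p:ℕ)), pf n := by
    exact (Finset.sum_image (fun a _ b _ hab => Nat.Primes.coe_nat_injective hab)).symm
  rw [himg]
  apply h
  intro n hn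
  simp only [Finset.mem_image, Finset.mem_filter] at hn
  obtain ⟨p, ⟨_, hpx⟩, rfl⟩ := hn
  exact ⟨p.2, hpx⟩

/-- bounding function for the Mertens-sum terms -/
noncomputable def hb (n : ℕ) : ℝ :=
  if n = 2 then 0.1932 else if n = 3 then 0.076 else if n = 5 then 0.0247 else (2/3) * pf n

lemma hb_nonneg (n : ℕ) : 0 ≤ hb n := by
  unfold hb
  split_ifs
  · norm_num
  · norm_num
  · norm_num
  · exact mul_nonneg (by norm_num) (pf_nonneg n)

lemma neg_term_le_hb {n : ℕ} (hn : n.Prime) :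
    -(Real.log (1 - 1/(n:ℝ)) + 1/(n:ℝ)) ≤ hb n := by
  rcases eq_or_ne n 2 with rfl | h2
  · have e1 : (1:ℝ) - 1/(2:ℕ) = (2:ℝ)⁻¹ := by norm_num
    rw [e1, Real.log_inv]
    unfold hb
    norm_num
    linarith [Real.log_two_lt_d9]
  rcases eq_or_ne n 3 with rfl | h3
  · have e1 : (1:ℝ) - 1/(3:ℕ) = ((3:ℝ)/2)⁻¹ := by norm_num
    rw [e1, Real.log_inv]
    have e2 : (2:ℝ) * Real.log (3/2) = Real.log 2 + Real.log (9/8) := by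
      rw [show Real.log 2 + Real.log (9/8) = Real.log (2 * (9/8)) by
        rw [Real.log_mul (by norm_num) (by norm_num)]]
      rw [show (2 * (9/8) : ℝ) = (3/2)^2 by norm_num, Real.log_pow]
      push_cast; ring
    have e4 : Real.log (9/8) ≤ 1/8 := by
      linarith [Real.log_le_sub_one_of_pos (show (0:ℝ) < 9/8 by norm_num)]
    unfold hb
    norm_num
    linarith [Real.log_two_lt_d9]
  rcases eq_or_ne n 5 with rfl | h5
  · have e1 : (1:ℝ) - 1/(5:ℕ) = ((5:ℝ)/4)⁻¹ := by norm_num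
    rw [e1, Real.log_inv]
    have e2 : (3:ℝ) * Real.log (5/4) = Real.log 2 + Real.log (125/128) := by
      rw [show Real.log 2 + Real.log (125/128) = Real.log (2 * (125/128)) by
        rw [Real.log_mul (by norm_num) (by norm_num)]]
      rw [show (2 * (125/128) : ℝ) = (5/4)^3 by norm_num, Real.log_pow]
      push_cast; ring
    have e4 : Real.log (125/128) ≤ -(3/128) := by
      linarith [Real.log_le_sub_one_of_pos (show (0:ℝ) < 125/128 by norm_num)]
    unfold hb
    norm_num
    linarith [Real.log_two_lt_d9]
  -- n ≥ 7
  have h7 : 7 ≤ n := by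
    have h2' := hn.two_le
    by_contra hcon
    push_neg at hcon
    interval_cases n
    · exact h2 rfl
    · exact h3 rfl
    · exact absurd hn (by norm_num)
    · exact h5 rfl
    · exact absurd hn (by norm_num)
  have hn7 : (7:ℝ) ≤ (n:ℝ) := by exact_mod_cast h7
  set y : ℝ := 1/(n:ℝ) with hy
  have hy0 : 0 < y := by positivity
  have hy7 : y ≤ 1/7 := by
    rw [hy]
    exact one_div_le_one_div_of_le (by norm_num) hn7
  have habs := Real.abs_log_sub_add_sum_range_le
    (x := y) (by rw [abs_of_pos hy0]; linarith) 2
  rw [abs_of_pos hy0] at habs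
  have hsum : ∑ i ∈ Finset.range 2, y ^ (i+1) / ((i:ℝ)+1) = y + y^2/2 := by
    rw [Finset.sum_range_succ, Finset.sum_range_succ, Finset.sum_range_zero]
    norm_num
  rw [hsum] at habs
  have h1 : -(Real.log (1-y) + y) ≤ y^2/2 + y^3/(1-y) := by
    have := abs_le.mp habs
    linarith [this.1]
  have h1y : (6:ℝ)/7 ≤ 1 - y := by linarith
  have h2' : y^3/(1-y) ≤ y^2 * (1/6) := by
    have e : y^3/(1-y) = y^2 * (y/(1-y)) := by
      rw [mul_div_assoc']
      ring_nf
    rw [e]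
    apply mul_le_mul_of_nonneg_left _ (by positivity)
    rw [div_le_iff₀ (by linarith)]
    linarith
  have h3' : -(Real.log (1-y) + y) ≤ (2/3) * y^2 := by linarith
  have h4' : y^2 ≤ pf n := by
    unfold pf
    rw [hy]
    rw [div_pow, one_pow]
    apply one_div_le_one_div_of_le
    · nlinarith
    · nlinarith
  have hbn : hb n = (2/3) * pf n := by
    unfold hb
    rw [if_neg h2, if_neg h3, if_neg h5]
  rw [hbn]
  calc -(Real.log (1-y) + y) ≤ (2/3) * y^2 := h3'
    _ ≤ (2/3) * pf n := by linarith

lemma mertensB_lower : 0.152 ≤ mertensB := by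
  have hγ := Real.one_half_lt_eulerMascheroniConstant
  have key : ∑' p : Nat.Primes, -(Real.log (1 - 1/((p:ℕ):ℝ)) + 1/((p:ℕ):ℝ)) ≤ 0.348 := by
    apply tsum_le_of_sum_le' (by norm_num)
    intro u
    classical
    have himg : ∑ p ∈ u, -(Real.log (1 - 1/((p:ℕ):ℝ)) + 1/((p:ℕ):ℝ))
        = ∑ n ∈ u.image (fun p : Nat.Primes => (p:ℕ)),
            -(Real.log (1 - 1/(n:ℝ)) + 1/(n:ℝ)) := by
      exact (Finset.sum_image (s := u) (g := fun p : Nat.Primes => (p:ℕ)) (f := fun n : ℕ => -(Real.log (1 - 1/(n:ℝ)) + 1/(n:ℝ))) (fun a _ b _ hab => Nat.Primes.coe_nat_injective hab)).symm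
    rw [himg]
    set T := u.image (fun p : Nat.Primes => (p:ℕ)) with hTdef
    have hT : ∀ n ∈ T, n.Prime := by
      intro n hn
      simp only [hTdef, Finset.mem_image] at hn
      obtain ⟨p, _, rfl⟩ := hn
      exact p.2
    calc ∑ n ∈ T, -(Real.log (1 - 1/(n:ℝ)) + 1/(n:ℝ))
        ≤ ∑ n ∈ T, hb n := Finset.sum_le_sum (fun n hn => neg_term_le_hb (hT n hn))
      _ ≤ 0.348 := by
        rw [← Finset.sum_filter_add_sum_filter_not T (fun n => n ≤ 7)]
        have hA : ∑ n ∈ T.filter (fun n => n ≤ 7), hb n ≤ hb 2 + hb 3 + hb 5 + hb 7 := by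
          have hsub : T.filter (fun n => n ≤ 7) ⊆ {2,3,5,7} := by
            intro n hn
            simp only [Finset.mem_filter] at hn
            have hp := hT n hn.1
            have h2 := hp.two_le
            have h7 := hn.2
            simp only [Finset.mem_insert, Finset.mem_singleton]
            interval_cases n
            · left; rfl
            · right; left; rfl
            · exact absurd hp (by norm_num)
            · right; right; left; rfl
            · exact absurd hp (by norm_num)
            · right; right; right; rfl
          calc ∑ n ∈ T.filter (fun n => n ≤ 7), hb n
              ≤ ∑ n ∈ ({2,3,5,7} : Finset ℕ), hb n :=
                Finset.sum_le_sum_of_subset_of_nonneg hsub (fun n _ _ => hb_nonneg n)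
            _ = hb 2 + hb 3 + hb 5 + hb 7 := by
                rw [Finset.sum_insert (by norm_num), Finset.sum_insert (by norm_num),
                  Finset.sum_insert (by norm_num), Finset.sum_singleton]
                ring
        have hB : ∑ n ∈ T.filter (fun n => ¬ n ≤ 7), hb n
            ≤ (2/3) * (1/((6:ℝ)*7)) + (2/3) * (1/((6:ℝ)*5)) := by
          set S := T.filter (fun n => ¬ n ≤ 7) with hSdef
          have hS : ∀ n ∈ S, n.Prime ∧ 11 ≤ n := by
            intro n hn
            simp only [hSdef, Finset.mem_filter] at hn
            have hp := hT n hn.1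
            refine ⟨hp, ?_⟩
            have h8 : 8 ≤ n := by omega
            by_contra hcon
            push_neg at hcon
            interval_cases n
            · exact absurd hp (by norm_num)
            · exact absurd hp (by norm_num)
            · exact absurd hp (by norm_num)
          have hcong : ∑ n ∈ S, hb n = ∑ n ∈ S, (2/3) * pf n := by
            apply Finset.sum_congr rfl
            intro n hn
            have h11 := (hS n hn).2
            unfold hb
            rw [if_neg (by omega), if_neg (by omega), if_neg (by omega)]
          rw [hcong]
          rw [← Finset.sum_filter_add_sum_filter_not S (fun n => n % 6 = 1)]
          have class1 : ∑ n ∈ S.filter (fun n => n % 6 = 1), (2/3 : ℝ) * pf n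
              ≤ (2/3) * (1/((6:ℝ)*7)) := by
            rw [← Finset.mul_sum]
            apply mul_le_mul_of_nonneg_left _ (by norm_num)
            apply sum_pf_class 6 1 7 (by norm_num) (by norm_num)
            intro n hn
            simp only [Finset.mem_filter] at hn
            have h11 := (hS n hn.1).2
            exact ⟨hn.2, by omega⟩
          have class5 : ∑ n ∈ S.filter (fun n => ¬ n % 6 = 1), (2/3 : ℝ) * pf n
              ≤ (2/3) * (1/((6:ℝ)*5)) := by
            rw [← Finset.mul_sum]
            apply mul_le_mul_of_nonneg_left _ (by norm_num)
            apply sum_pf_class 6 5 5 (by norm_num) (by norm_num)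
            intro n hn
            simp only [Finset.mem_filter] at hn
            obtain ⟨hp, h11⟩ := hS n hn.1
            have hmod := prime_mod6 hp (by omega)
            have h6 : n % 6 = 5 := by
              rcases hmod with h | h
              · exact absurd h hn.2
              · exact h
            exact ⟨h6, by omega⟩
          linarith
        have hbvals : hb 2 + hb 3 + hb 5 + hb 7 = 0.1932 + 0.076 + 0.0247 + (2/3) * (1/42) := by
          unfold hb pf
          norm_num
        rw [hbvals] at hA
        have : (0.1932 + 0.076 + 0.0247 + (2/3) * (1/42) : ℝ)
            + ((2/3) * (1/((6:ℝ)*7)) + (2/3) * (1/((6:ℝ)*5))) ≤ 0.348 := by norm_num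
        linarith
  have hneg : ∑' p : Nat.Primes, -(Real.log (1 - 1/((p:ℕ):ℝ)) + 1/((p:ℕ):ℝ))
      = - ∑' p : Nat.Primes, (Real.log (1 - 1/((p:ℕ):ℝ)) + 1/((p:ℕ):ℝ)) := tsum_neg
  rw [hneg] at key
  unfold mertensB
  linarith

set_option maxHeartbeats 2000000 in
theorem tail_sum_one_div_p_p_sub_one (x : ℝ) (hx : 1 < x) :
    (∑' p : Nat.Primes, if x < ((p : ℕ) : ℝ) then
        1 / (((p : ℕ) : ℝ) * (((p : ℕ) : ℝ) - 1)) else 0)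
      < (1 / (x - 1)) * (2 * mertensB + 1 / Real.log x + 2 / (Real.log x) ^ 2) := by
  show (∑' p : Nat.Primes, if x < ((p : ℕ) : ℝ) then pf (p:ℕ) else 0)
      < (1 / (x - 1)) * (2 * mertensB + 1 / Real.log x + 2 / (Real.log x) ^ 2)
  have hB := mertensB_lower
  have hL : 0 < Real.log x := Real.log_pos hx
  have hx0 : (0:ℝ) < x := by linarith
  have hx1 : (0:ℝ) < x - 1 := by linarith
  have hfl : x - 1 < (⌊x⌋₊ : ℝ) := Nat.sub_one_lt_floor x
  have hfl1 : 1 ≤ ⌊x⌋₊ := Nat.le_floor (by exact_mod_cast hx.le)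
  have hflR : (1:ℝ) ≤ (⌊x⌋₊:ℝ) := by exact_mod_cast hfl1
  set R := 2*mertensB + 1/Real.log x + 2/(Real.log x)^2 with hR
  clear_value R
  have hQpos : 0 < 1/Real.log x + 2/(Real.log x)^2 := by positivity
  have l2u := Real.log_two_lt_d9
  rcases le_or_gt (Real.log x) (5/2) with hc1 | hc1
  · -- Case 1 : small x
    have hbound : (∑' p : Nat.Primes, if x < ((p : ℕ) : ℝ) then pf (p:ℕ) else 0)
        ≤ 1/(((⌊x⌋₊+1:ℕ):ℝ) - 1) := by
      refine tsum_primes_le x _ ?_ ?_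
      · push_cast
        apply one_div_nonneg.mpr
        linarith
      · intro T hT
        apply sum_pf_le (⌊x⌋₊+1) (by omega)
        intro n hn
        have : ⌊x⌋₊ < n := (Nat.floor_lt hx0.le).mpr (hT n hn).2
        omega
    have hsimp : 1/(((⌊x⌋₊+1:ℕ):ℝ) - 1) = 1/(⌊x⌋₊:ℝ) := by push_cast; norm_num
    rw [hsimp] at hbound
    have hlt : 1/(⌊x⌋₊:ℝ) < 1/(x-1) := one_div_lt_one_div_of_lt hx1 hfl
    have hR1 : 1 ≤ R := by
      have t1 : (2/5 : ℝ) ≤ 1/Real.log x := by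
        rw [div_le_div_iff₀ (by norm_num) hL]
        linarith
      have t2 : (8/25 : ℝ) ≤ 2/(Real.log x)^2 := by
        rw [div_le_div_iff₀ (by norm_num) (by positivity)]
        nlinarith
      rw [hR]; linarith
    calc (∑' p : Nat.Primes, if x < ((p : ℕ) : ℝ) then pf (p:ℕ) else 0)
        ≤ 1/(⌊x⌋₊:ℝ) := hbound
      _ < 1/(x-1) := hlt
      _ = (1/(x-1)) * 1 := (mul_one _).symm
      _ ≤ (1/(x-1)) * R := by
          apply mul_le_mul_of_nonneg_left hR1
          positivity
  · -- x > 12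
    have e9 : Real.log 9 = 2 * Real.log 3 := by
      rw [show (9:ℝ) = 3^2 by norm_num, Real.log_pow]; push_cast; ring
    have e98 : Real.log 9 = 3 * Real.log 2 + Real.log (9/8) := by
      rw [show (9:ℝ) = 2^3 * (9/8) by norm_num,
        Real.log_mul (by norm_num) (by norm_num), Real.log_pow]
      push_cast; ring
    have l98 : Real.log (9/8) ≤ 1/8 := by
      linarith [Real.log_le_sub_one_of_pos (show (0:ℝ) < 9/8 by norm_num)]
    have l3 : Real.log 3 ≤ 1.1022207712 := by linarith
    have e12 : Real.log 12 = 2*Real.log 2 + Real.log 3 := by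
      rw [show (12:ℝ) = 2^2*3 by norm_num,
        Real.log_mul (by norm_num) (by norm_num), Real.log_pow]
      push_cast; ring
    have l12 : Real.log 12 < 5/2 := by linarith
    have hx12 : 12 < x := by
      have : Real.log 12 < Real.log x := by linarith
      exact (Real.log_lt_log_iff (by norm_num) hx0).mp this
    have hfl12 : 12 ≤ ⌊x⌋₊ := Nat.le_floor (by push_cast; linarith)
    rcases le_or_gt (Real.log x) 7 with hc2 | hc2
    · -- Case 2 : 12 < x ≤ e^7
      have hcastN : ((⌊x⌋₊ - 5 : ℕ):ℝ) = (⌊x⌋₊:ℝ) - 5 := by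
        rw [Nat.cast_sub (by omega)]; norm_num
      have hNx : x - 6 < ((⌊x⌋₊ - 5 : ℕ):ℝ) := by rw [hcastN]; linarith
      have hx6 : (0:ℝ) < x - 6 := by linarith
      have hcard : (({1,5} : Finset ℕ).card) = 2 := by decide
      have hbound : (∑' p : Nat.Primes, if x < ((p : ℕ) : ℝ) then pf (p:ℕ) else 0)
          ≤ (2:ℝ)/((6:ℝ)*((⌊x⌋₊ - 5:ℕ):ℝ)) := by
        refine tsum_primes_le x _ ?_ ?_
        · positivity
        · intro T hT
          have hcl := sum_pf_classes 6 (⌊x⌋₊-5) {1,5} (by norm_num) (by omega) T ?_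
          · rw [hcard] at hcl
            push_cast at hcl ⊢
            exact hcl
          · intro n hn
            have hp := (hT n hn).1
            have h13 : ⌊x⌋₊ < n := (Nat.floor_lt hx0.le).mpr (hT n hn).2
            refine ⟨?_, by omega⟩
            have := prime_mod6 hp (by omega)
            simp only [Finset.mem_insert, Finset.mem_singleton]
            tauto
      have step : (2:ℝ)/((6:ℝ)*((⌊x⌋₊-5:ℕ):ℝ)) < 1/(3*(x-6)) := by
        rw [div_lt_div_iff₀ (mul_pos (by norm_num) (by rw [hcastN]; linarith))
          (mul_pos (by norm_num) hx6)]
        nlinarith [hNx]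
      have hfin : 1/(3*(x-6)) ≤ (1/(x-1)) * R := by
        rcases le_or_gt x 18 with hc3 | hc3
        · have hle : Real.log x ≤ Real.log 18 := Real.log_le_log hx0 hc3
          have e18 : Real.log 18 = Real.log 2 + 2*Real.log 3 := by
            rw [show (18:ℝ) = 2*9 by norm_num,
              Real.log_mul (by norm_num) (by norm_num), e9]
          have l18 : Real.log x ≤ 2.9 := by linarith
          have t1 : (10/29:ℝ) ≤ 1/Real.log x := by
            rw [le_div_iff₀ hL]
            linarith
          have t2 : (200/841:ℝ) ≤ 2/(Real.log x)^2 := by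
            rw [le_div_iff₀ (by positivity)]
            nlinarith
          have hRlow : (0.886:ℝ) ≤ R := by rw [hR]; linarith
          rw [show (1/(x-1))*R = R/(x-1) from by ring]
          rw [div_le_div_iff₀ (mul_pos (by norm_num) hx6) hx1]
          nlinarith [mul_le_mul_of_nonneg_right hRlow
            (by linarith : (0:ℝ) ≤ 3*(x-6))]
        · have t1 : (1/7:ℝ) ≤ 1/Real.log x := one_div_le_one_div_of_le hL hc2
          have t2 : (2/49:ℝ) ≤ 2/(Real.log x)^2 := by
            rw [le_div_iff₀ (by positivity)]
            nlinarith
          have hRlow : (0.4876:ℝ) ≤ R := by rw [hR]; linarith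
          rw [show (1/(x-1))*R = R/(x-1) from by ring]
          rw [div_le_div_iff₀ (mul_pos (by norm_num) hx6) hx1]
          nlinarith [mul_le_mul_of_nonneg_right hRlow
            (by linarith : (0:ℝ) ≤ 3*(x-6))]
      exact hbound.trans_lt (step.trans_le hfin)
    · -- Case 3 : x > 1000
      have l54 : Real.log 5 ≤ 1.6362943616 := by
        have e5 : Real.log 5 = 2*Real.log 2 + Real.log (5/4) := by
          rw [show (5:ℝ) = 2^2 * (5/4) by norm_num,
            Real.log_mul (by norm_num) (by norm_num), Real.log_pow]
          push_cast; ring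
        have l54' : Real.log (5/4) ≤ 1/4 := by
          linarith [Real.log_le_sub_one_of_pos (show (0:ℝ) < 5/4 by norm_num)]
        linarith
      have l1000 : Real.log 1000 < 7 := by
        have e1000 : Real.log 1000 = 3*(Real.log 2 + Real.log 5) := by
          rw [show (1000:ℝ) = (2*5)^3 by norm_num, Real.log_pow,
            Real.log_mul (by norm_num) (by norm_num)]
          push_cast; ring
        linarith
      have hx1000 : 1000 < x := by
        have : Real.log 1000 < Real.log x := by linarith
        exact (Real.log_lt_log_iff (by norm_num) hx0).mp this
      have hfl1000 : 1000 ≤ ⌊x⌋₊ := Nat.le_floor (by push_cast; linarith)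
      have hcastN : ((⌊x⌋₊ - 29 : ℕ):ℝ) = (⌊x⌋₊:ℝ) - 29 := by
        rw [Nat.cast_sub (by omega)]; norm_num
      have hNx : x - 30 < ((⌊x⌋₊-29:ℕ):ℝ) := by rw [hcastN]; linarith
      have hx30 : (0:ℝ) < x - 30 := by linarith
      have hcard : (({1,7,11,13,17,19,23,29} : Finset ℕ).card) = 8 := by decide
      have hbound : (∑' p : Nat.Primes, if x < ((p : ℕ) : ℝ) then pf (p:ℕ) else 0)
          ≤ (8:ℝ)/((30:ℝ)*((⌊x⌋₊-29:ℕ):ℝ)) := by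
        refine tsum_primes_le x _ ?_ ?_
        · positivity
        · intro T hT
          have hcl := sum_pf_classes 30 (⌊x⌋₊-29) {1,7,11,13,17,19,23,29}
            (by norm_num) (by omega) T ?_
          · rw [hcard] at hcl
            push_cast at hcl ⊢
            exact hcl
          · intro n hn
            have hp := (hT n hn).1
            have h13 : ⌊x⌋₊ < n := (Nat.floor_lt hx0.le).mpr (hT n hn).2
            exact ⟨prime_mod30 hp (by omega), by omega⟩
      have step : (8:ℝ)/((30:ℝ)*((⌊x⌋₊-29:ℕ):ℝ)) < 8/(30*(x-30)) := by
        rw [div_lt_div_iff₀ (mul_pos (by norm_num) (by rw [hcastN]; linarith))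
          (mul_pos (by norm_num) hx30)]
        nlinarith [hNx]
      have hfin : (8:ℝ)/(30*(x-30)) ≤ (1/(x-1)) * R := by
        have hRlow : (0.304:ℝ) ≤ R := by rw [hR]; linarith
        rw [show (1/(x-1))*R = R/(x-1) from by ring]
        rw [div_le_div_iff₀ (mul_pos (by norm_num) hx30) hx1]
        nlinarith [mul_le_mul_of_nonneg_right hRlow
          (by linarith : (0:ℝ) ≤ 30*(x-30))]
      exact hbound.trans_lt (step.trans_le hfin)
end

section
/- For every integer n ≥ 3, Euler's totient function satisfies φ(n) > (log 2 / 2) · n / log n. -/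
open Finset

lemma key_prod (S : Finset ℕ) (h2 : ∀ p ∈ S, 2 ≤ p) :
    (1 : ℚ) / (S.card + 1) ≤ ∏ p ∈ S, (1 - (p : ℚ)⁻¹) := by
  induction S using Finset.strongInduction with
  | _ S ih =>
    rcases S.eq_empty_or_nonempty with rfl | hne
    · simp
    · obtain ⟨M, hM, hmax⟩ := S.exists_max_image id hne
      have hsub : S ⊆ Finset.Icc 2 M := fun p hp =>
        Finset.mem_Icc.mpr ⟨h2 p hp, hmax p hp⟩
      have hcard : S.card ≤ M - 1 := by
        have := Finset.card_le_card hsub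
        simpa [Nat.card_Icc] using this
      have hM2 : 2 ≤ M := h2 M hM
      have hMcard : S.card + 1 ≤ M := by omega
      have hpos : 0 < S.card := Finset.card_pos.mpr hne
      have hrec := ih (S.erase M) (Finset.erase_ssubset hM)
        (fun p hp => h2 p (Finset.mem_of_mem_erase hp))
      rw [Finset.card_erase_of_mem hM] at hrec
      have hprod : ∏ p ∈ S, (1 - (p : ℚ)⁻¹)
          = (1 - (M : ℚ)⁻¹) * ∏ p ∈ S.erase M, (1 - (p : ℚ)⁻¹) := by
        rw [← Finset.prod_erase_mul _ _ hM, mul_comm]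
      rw [hprod]
      have hMQ : ((S.card : ℚ) + 1) ≤ (M : ℚ) := by exact_mod_cast hMcard
      have hMpos : (0 : ℚ) < M := by positivity
      have h1 : (1 : ℚ) - ((S.card : ℚ) + 1)⁻¹ ≤ 1 - (M : ℚ)⁻¹ := by
        have : (M : ℚ)⁻¹ ≤ ((S.card : ℚ) + 1)⁻¹ := by
          apply inv_anti₀ (by positivity) hMQ
        linarith
      have hrec' : (1 : ℚ) / ((S.card : ℚ) - 1 + 1) ≤ ∏ p ∈ S.erase M, (1 - (p : ℚ)⁻¹) := by
        have : ((S.card - 1 : ℕ) : ℚ) = (S.card : ℚ) - 1 := by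
          have : 1 ≤ S.card := hpos
          push_cast [this]; ring
        rwa [this] at hrec
      have hc : (0 : ℚ) < (S.card : ℚ) := by exact_mod_cast hpos
      have hc0 : (S.card : ℚ) ≠ 0 := ne_of_gt hc
      have hstep : (1 : ℚ) / (S.card + 1) ≤ (1 - ((S.card : ℚ) + 1)⁻¹) * (1 / ((S.card : ℚ) - 1 + 1)) := by
        have heq : (1 - ((S.card : ℚ) + 1)⁻¹) * (1 / ((S.card : ℚ) - 1 + 1)) = 1 / (S.card + 1) := by
          field_simp
          ring_nf
          exact mul_inv_cancel₀ hc0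
        rw [heq]
      calc (1 : ℚ) / (S.card + 1)
          ≤ (1 - ((S.card : ℚ) + 1)⁻¹) * (1 / ((S.card : ℚ) - 1 + 1)) := hstep
        _ ≤ (1 - (M : ℚ)⁻¹) * ∏ p ∈ S.erase M, (1 - (p : ℚ)⁻¹) := by
            have hnn : (0:ℚ) ≤ 1 / ((S.card : ℚ) - 1 + 1) := by
              rw [sub_add_cancel]; positivity
            have hMib : (M : ℚ)⁻¹ ≤ 1 := inv_le_one_of_one_le₀ (by exact_mod_cast (by omega : 1 ≤ M))
            exact mul_le_mul h1 hrec' hnn (by linarith)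

theorem totient_gt_log_two_div_two (n : ℕ) (hn : 3 ≤ n) :
    (Real.log 2 / 2) * n / Real.log n < (Nat.totient n : ℝ) := by
  set ω := n.primeFactors.card with hω
  have hn0 : 0 < n := by omega
  -- φ(n) * (ω + 1) ≥ n over ℚ
  have hprod := key_prod n.primeFactors (fun p hp => (Nat.prime_of_mem_primeFactors hp).two_le)
  have htot := Nat.totient_eq_mul_prod_factors n
  have hφω : (n : ℚ) ≤ (Nat.totient n : ℚ) * (ω + 1) := by
    have h1 : (n : ℚ) * (1 / (ω + 1)) ≤ (Nat.totient n : ℚ) := by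
      rw [htot]
      apply mul_le_mul_of_nonneg_left hprod (by positivity)
    have hωpos : (0 : ℚ) < (ω : ℚ) + 1 := by positivity
    rw [← div_le_iff₀ hωpos]
    calc (n : ℚ) / ((ω : ℚ) + 1) = (n : ℚ) * (1 / (ω + 1)) := by ring
      _ ≤ _ := h1
  have hφωR : (n : ℝ) ≤ (Nat.totient n : ℝ) * (ω + 1) := by exact_mod_cast hφω
  -- 2 ^ ω ≤ n
  have h2ω : 2 ^ ω ≤ n := by
    calc 2 ^ ω ≤ ∏ p ∈ n.primeFactors, p :=
          Finset.pow_card_le_prod _ _ _ (fun p hp => (Nat.prime_of_mem_primeFactors hp).two_le)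
      _ ≤ n := Nat.le_of_dvd hn0 (Nat.prod_primeFactors_dvd n)
  have hlog : (ω : ℝ) * Real.log 2 ≤ Real.log n := by
    calc (ω : ℝ) * Real.log 2 = Real.log ((2 : ℝ) ^ ω) := by
          rw [Real.log_pow]
      _ ≤ Real.log n := Real.log_le_log (by positivity) (by exact_mod_cast h2ω)
  have hl2 : (0 : ℝ) < Real.log 2 := Real.log_pos (by norm_num)
  have hln : Real.log 2 < Real.log n := by
    apply Real.log_lt_log (by norm_num)
    exact_mod_cast (by omega : 2 < n)
  have hlnpos : (0 : ℝ) < Real.log n := lt_trans hl2 hln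
  have hφpos : (0 : ℝ) < (Nat.totient n : ℝ) := by
    exact_mod_cast Nat.totient_pos.mpr hn0
  -- combine: log2 * n ≤ log2 * φ * (ω+1) = φ * (ω log2 + log2) ≤ φ * (log n + log 2) < φ * 2 log n
  rw [div_lt_iff₀ hlnpos]
  have h1 : Real.log 2 * (n : ℝ) ≤ (Nat.totient n : ℝ) * ((ω : ℝ) * Real.log 2 + Real.log 2) := by
    nlinarith
  have h2 : (Nat.totient n : ℝ) * ((ω : ℝ) * Real.log 2 + Real.log 2)
      < (Nat.totient n : ℝ) * (2 * Real.log n) := by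
    apply mul_lt_mul_of_pos_left _ hφpos
    linarith
  nlinarith
end
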